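/- Let H be a real Hilbert space, T, A : H → H, B₁ : ℝ^{nw} → H, C₁ : H → ℝ^{nz}, C₂ : H → ℝ^{ny} bounded linear operators, D₂₁ : ℝ^{nw} → ℝ^{ny} a linear map, and ε, γ > 0. Suppose there exist a bounded self-adjoint operator P : H → H with ⟨x, P x⟩ ≥ ε‖x‖² for all x, a bounded operator Z : ℝ^{ny} → H, and a self-adjoint linear map W : ℝ^{nw} → ℝ^{nw} such that: (i) 2⟨P T x, A x⟩ + 2⟨T x, Z (C₂ x)⟩ + ‖C₁ x‖² ≤ 0 for all x ∈ H (i.e., T*PA + A*PT + T*ZC₂ + C₂*Z*T + C₁*C₁ ⪯ 0); (ii) ⟨x, P x⟩ − 2⟨x, P(B₁ u) + Z(D₂₁ u)⟩ + ⟨u, W u⟩ ≥ 0 for all x ∈ H and u ∈ ℝ^{nw}; and (iii) trace(W) ≤ γ². Then for every bounded linear operator L : ℝ^{ny} → H with P ∘ L = Z (i.e., L = P⁻¹Z), and every u₀ ∈ ℝ^{nw}, every differentiable e : [0,∞) → H with T ė(t) = (A + L ∘ C₂) e(t) for all t ≥ 0 and T e(0) = −(B₁ + L ∘ D₂₁)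 u₀ satisfies ∫₀^∞ ‖C₁ e(t)‖² dt ≤ γ² ‖u₀‖². (Corollary 4: LPI for the H₂-optimal Luenberger estimator; γ bounds the H₂-norm of the error system Σ(T, A + L C₂, −(B₁ + L D₂₁), C₁).) -/

import Mathlib

open scoped RealInnerProductSpace

open MeasureTheory

/-- For a positive-semidefinite operator on a finite-dimensional Euclidean space,
the quadratic form is bounded by the trace times the squared norm. -/
lemma inner_le_trace_mul_sq {n : ℕ}
    (W : EuclideanSpace ℝ (Fin n) →L[ℝ] EuclideanSpace ℝ (Fin n))
    (hW : ∀ u, (0:ℝ) ≤ ⟪u, W u⟫) (u : EuclideanSpace ℝ (Fin n)) :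
    ⟪u, W u⟫ ≤ LinearMap.trace ℝ (EuclideanSpace ℝ (Fin n)) W.toLinearMap * ‖u‖ ^ 2 := by
  rcases eq_or_ne u 0 with rfl | hu
  · simp
  · have hn : (0:ℝ) < ‖u‖ := norm_pos_iff.mpr hu
    set v : EuclideanSpace ℝ (Fin n) := ‖u‖⁻¹ • u with hv_def
    have hv1 : ‖v‖ = 1 := by
      rw [hv_def, norm_smul, norm_inv, norm_norm, inv_mul_cancel₀ hn.ne']
    have horth : Orthonormal ℝ ((↑) : ({v} : Set (EuclideanSpace ℝ (Fin n))) → EuclideanSpace ℝ (Fin n)) := by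
      constructor
      · rintro ⟨x, hx⟩
        simp only [Set.mem_singleton_iff] at hx
        simp [hx, hv1]
      · rintro ⟨x, hx⟩ ⟨y, hy⟩ hxy
        simp only [Set.mem_singleton_iff] at hx hy
        exact absurd (Subtype.ext (hx.trans hy.symm)) hxy
    obtain ⟨s, b, hvs, hb⟩ := horth.exists_orthonormalBasis_extension
    classical
    have htr : LinearMap.trace ℝ (EuclideanSpace ℝ (Fin n)) W.toLinearMap
        = ∑ i : s, ⟪(b i : EuclideanSpace ℝ (Fin n)), W (b i)⟫ := by
      rw [LinearMap.trace_eq_matrix_trace ℝ b.toBasis, Matrix.trace]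
      refine Finset.sum_congr rfl fun i _ => ?_
      rw [Matrix.diag_apply, LinearMap.toMatrix_apply]
      rw [OrthonormalBasis.coe_toBasis_repr_apply, OrthonormalBasis.repr_apply_apply,
        OrthonormalBasis.coe_toBasis]
      rfl
    have hvmem : v ∈ s := hvs (Set.mem_singleton v)
    have hsingle : ⟪v, W v⟫ ≤ ∑ i : s, ⟪(b i : EuclideanSpace ℝ (Fin n)), W (b i)⟫ := by
      have := Finset.single_le_sum
        (f := fun i : s => ⟪(b i : EuclideanSpace ℝ (Fin n)), W (b i)⟫)
        (fun i _ => hW _) (Finset.mem_univ (⟨v, hvmem⟩ : s))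
      simpa [hb] using this
    have hvW : ⟪v, W v⟫ = ‖u‖⁻¹ * (‖u‖⁻¹ * ⟪u, W u⟫) := by
      rw [hv_def, W.map_smul, real_inner_smul_left, real_inner_smul_right]
    have hle : ‖u‖⁻¹ * (‖u‖⁻¹ * ⟪u, W u⟫)
        ≤ LinearMap.trace ℝ (EuclideanSpace ℝ (Fin n)) W.toLinearMap := by
      rw [← hvW, htr]; exact hsingle
    calc ⟪u, W u⟫ = (‖u‖⁻¹ * (‖u‖⁻¹ * ⟪u, W u⟫)) * ‖u‖ ^ 2 := by
          field_simp
      _ ≤ LinearMap.trace ℝ (EuclideanSpace ℝ (Fin n)) W.toLinearMap * ‖u‖ ^ 2 :=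
          mul_le_mul_of_nonneg_right hle (sq_nonneg _)

/-- **Corollary 4 (LPI for the `H₂`-optimal Luenberger estimator).**
If `P ⪰ εI` self-adjoint, `Z`, and `W` self-adjoint satisfy the estimator LPI
(i) `T*PA + A*PT + T*ZC₂ + C₂*Z*T + C₁*C₁ ⪯ 0`,
(ii) `[[P, −(PB₁ + ZD₂₁)], [−(PB₁ + ZD₂₁)*, W]] ⪰ 0`, and (iii) `trace(W) ≤ γ²`,
then for the observer gain `L = P⁻¹Z` the error system
`Σ(T, A + L C₂, −(B₁ + L D₂₁), C₁)` has `H₂`-norm at most `γ`. -/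
theorem pie_H2_optimal_estimator
    {H : Type*} [NormedAddCommGroup H] [InnerProductSpace ℝ H] [CompleteSpace H]
    (nw nz ny : ℕ) (T A : H →L[ℝ] H)
    (B₁ : EuclideanSpace ℝ (Fin nw) →L[ℝ] H)
    (C₁ : H →L[ℝ] EuclideanSpace ℝ (Fin nz))
    (C₂ : H →L[ℝ] EuclideanSpace ℝ (Fin ny))
    (D₂₁ : EuclideanSpace ℝ (Fin nw) →L[ℝ] EuclideanSpace ℝ (Fin ny))
    (ε γ : ℝ) (hε : 0 < ε) (hγ : 0 < γ)
    (P : H →L[ℝ] H) (hPsa : IsSelfAdjoint P)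
    (hPpos : ∀ x : H, ε * ‖x‖ ^ 2 ≤ ⟪x, P x⟫)
    (Z : EuclideanSpace ℝ (Fin ny) →L[ℝ] H)
    (W : EuclideanSpace ℝ (Fin nw) →L[ℝ] EuclideanSpace ℝ (Fin nw)) (hWsa : IsSelfAdjoint W)
    (hLPI : ∀ x : H,
      2 * ⟪P (T x), A x⟫ + 2 * ⟪T x, Z (C₂ x)⟫ + ‖C₁ x‖ ^ 2 ≤ 0)
    (hblock : ∀ (x : H) (u : EuclideanSpace ℝ (Fin nw)),
      0 ≤ ⟪x, P x⟫ - 2 * ⟪x, P (B₁ u) + Z (D₂₁ u)⟫ + ⟪u, W u⟫)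
    (htrace : LinearMap.trace ℝ (EuclideanSpace ℝ (Fin nw)) W.toLinearMap ≤ γ ^ 2) :
    ∀ L : EuclideanSpace ℝ (Fin ny) →L[ℝ] H, P ∘L L = Z →
      ∀ (u₀ : EuclideanSpace ℝ (Fin nw)) (e e' : ℝ → H),
        (∀ t : ℝ, 0 ≤ t → HasDerivAt e (e' t) t) →
        (∀ t : ℝ, 0 ≤ t → T (e' t) = (A + L ∘L C₂) (e t)) →
        T (e 0) = -(B₁ u₀ + L (D₂₁ u₀)) →
        (∫ t in Set.Ioi (0 : ℝ), ‖C₁ (e t)‖ ^ 2) ≤ γ ^ 2 * ‖u₀‖ ^ 2 := by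
  intro L hL u₀ e e' hderiv hdyn hinit
  have hP : ∀ x y : H, ⟪P x, y⟫ = ⟪x, P y⟫ := fun x y =>
    ((ContinuousLinearMap.isSelfAdjoint_iff_isSymmetric).mp hPsa) x y
  set f : ℝ → ℝ := fun t => ‖C₁ (e t)‖ ^ 2 with hf_def
  set V : ℝ → ℝ := fun t => ⟪T (e t), P (T (e t))⟫ with hV_def
  have hfnn : ∀ t, 0 ≤ f t := fun t => sq_nonneg _
  have hVnn : ∀ t, 0 ≤ V t := fun t =>
    le_trans (by positivity) (hPpos (T (e t)))
  -- continuity of f at nonnegative times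
  have hfc : ∀ t : ℝ, 0 ≤ t → ContinuousAt f t := by
    intro t ht
    have he : ContinuousAt e t := (hderiv t ht).continuousAt
    exact (continuous_norm.comp C₁.continuous).continuousAt.comp he |>.pow 2
  have hfcIcc : ∀ a : ℝ, ContinuousOn f (Set.Icc 0 a) :=
    fun a t ht => (hfc t ht.1).continuousWithinAt
  -- derivative of the Lyapunov function
  have hVd : ∀ t : ℝ, 0 ≤ t →
      HasDerivAt V (2 * ⟪P (T (e t)), T (e' t)⟫) t := by
    intro t ht
    have h1 : HasDerivAt (fun s => T (e s)) (T (e' t)) t :=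
      T.hasFDerivAt.comp_hasDerivAt t (hderiv t ht)
    have h2 : HasDerivAt (fun s => P (T (e s))) (P (T (e' t))) t :=
      P.hasFDerivAt.comp_hasDerivAt t h1
    have h3 := h1.inner ℝ h2
    have h4 : 2 * ⟪P (T (e t)), T (e' t)⟫
        = ⟪T (e t), P (T (e' t))⟫ + ⟪T (e' t), P (T (e t))⟫ := by
      rw [← hP (T (e t)) (T (e' t)), real_inner_comm (T (e' t)) (P (T (e t)))]
      ring
    rw [h4]
    exact h3
  -- the derivative bound from the LPI
  have hd_nonpos : ∀ t : ℝ, 0 ≤ t → 2 * ⟪P (T (e t)), T (e' t)⟫ + f t ≤ 0 := by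
    intro t ht
    have hTe' : T (e' t) = A (e t) + L (C₂ (e t)) := by
      rw [hdyn t ht]; simp
    have hZ : ⟪P (T (e t)), L (C₂ (e t))⟫ = ⟪T (e t), Z (C₂ (e t))⟫ := by
      rw [hP]
      congr 1
      rw [← hL]
      rfl
    have := hLPI (e t)
    rw [hTe', inner_add_right, hZ]
    simp only [hf_def]
    linarith
  -- partial integrals are bounded by V 0
  have key : ∀ a : ℝ, 0 ≤ a → (∫ s in (0:ℝ)..a, f s) ≤ V 0 := by
    intro a ha
    rcases eq_or_lt_of_le ha with rfl | ha
    · simp [intervalIntegral.integral_same]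
      exact hVnn 0
    · set g : ℝ → ℝ := fun t => V t + ∫ s in (0:ℝ)..t, f s with hg_def
      have h_int : IntegrableOn f (Set.uIcc 0 a) := by
        rw [Set.uIcc_of_le ha.le]
        exact (hfcIcc a).integrableOn_compact isCompact_Icc
      have hgc : ContinuousOn g (Set.Icc 0 a) := by
        refine ContinuousOn.add ?_ ?_
        · exact fun t ht => ((hVd t ht.1).continuousAt).continuousWithinAt
        · have := intervalIntegral.continuousOn_primitive_interval h_int
          rwa [Set.uIcc_of_le ha.le] at this
      have hant : AntitoneOn g (Set.Icc 0 a) := by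
        have hmem : ∀ t ∈ interior (Set.Icc (0:ℝ) a),
            HasDerivAt g (2 * ⟪P (T (e t)), T (e' t)⟫ + f t) t := by
          intro t ht
          rw [interior_Icc] at ht
          have hiv : IntervalIntegrable f volume 0 t := by
            apply ContinuousOn.intervalIntegrable
            rw [Set.uIcc_of_le ht.1.le]
            exact hfcIcc t
          have hmeas : StronglyMeasurableAtFilter f (nhds t) volume :=
            ContinuousOn.stronglyMeasurableAtFilter isOpen_Ioi
              (fun s hs => (hfc s (le_of_lt hs)).continuousWithinAt) t ht.1
          have hFd : HasDerivAt (fun x => ∫ s in (0:ℝ)..x, f s) (f t) t :=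
            intervalIntegral.integral_hasDerivAt_right hiv hmeas (hfc t ht.1.le)
          exact (hVd t ht.1.le).add hFd
        refine antitoneOn_of_deriv_nonpos (convex_Icc 0 a) hgc
          (fun t ht => (hmem t ht).differentiableAt.differentiableWithinAt) ?_
        intro t ht
        rw [(hmem t ht).deriv]
        rw [interior_Icc] at ht
        exact hd_nonpos t ht.1.le
      have hga : g a ≤ g 0 :=
        hant (Set.left_mem_Icc.mpr ha.le) (Set.right_mem_Icc.mpr ha.le) ha.le
      have hg0 : g 0 = V 0 := by simp [hg_def]
      have : V a + (∫ s in (0:ℝ)..a, f s) ≤ V 0 := by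
        rw [← hg0]; exact hga
      linarith [hVnn a]
  -- bound V 0 by γ² ‖u₀‖²
  set v : H := B₁ u₀ + L (D₂₁ u₀) with hv_def
  have hPv : P (B₁ u₀) + Z (D₂₁ u₀) = P v := by
    rw [← hL, hv_def, map_add]
    rfl
  have hV0 : V 0 = ⟪v, P v⟫ := by
    simp only [hV_def, hinit, map_neg, inner_neg_neg]
  have hW_psd : ∀ u, (0:ℝ) ≤ ⟪u, W u⟫ := by
    intro u
    have := hblock 0 u
    simpa using this
  have hV0W : V 0 ≤ ⟪u₀, W u₀⟫ := by
    have := hblock v u₀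
    rw [hPv] at this
    rw [hV0]
    linarith
  have hV0γ : V 0 ≤ γ ^ 2 * ‖u₀‖ ^ 2 := by
    calc V 0 ≤ ⟪u₀, W u₀⟫ := hV0W
      _ ≤ LinearMap.trace ℝ (EuclideanSpace ℝ (Fin nw)) W.toLinearMap * ‖u₀‖ ^ 2 :=
          inner_le_trace_mul_sq W hW_psd u₀
      _ ≤ γ ^ 2 * ‖u₀‖ ^ 2 := mul_le_mul_of_nonneg_right htrace (sq_nonneg _)
  -- integrability on Ioi 0
  have hint : IntegrableOn f (Set.Ioi (0:ℝ)) volume := by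
    refine integrableOn_Ioi_of_intervalIntegral_norm_bounded (V 0) 0
      (f := f) (b := fun i : ℝ => i) (l := Filter.atTop) ?_ Filter.tendsto_id ?_
    · intro i
      rcases le_or_gt i 0 with hi | hi
      · rw [Set.Ioc_eq_empty (by exact fun h => absurd (le_of_lt h) (not_le.mpr (lt_of_le_of_lt hi (lt_of_le_of_ne (le_refl 0) (fun _ => by linarith)))) )]
        · exact integrableOn_empty
      · exact ((hfcIcc i).integrableOn_compact isCompact_Icc).mono_set Set.Ioc_subset_Icc_self
    · filter_upwards [Filter.eventually_ge_atTop (0:ℝ)] with i hi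
      have hnorm : ∀ x, ‖f x‖ = f x := fun x => Real.norm_of_nonneg (hfnn x)
      calc (∫ x in (0:ℝ)..i, ‖f x‖) = ∫ x in (0:ℝ)..i, f x := by
            simp_rw [hnorm]
        _ ≤ V 0 := key i hi
  -- conclude
  have htend := intervalIntegral_tendsto_integral_Ioi 0 hint Filter.tendsto_id
  have hfinal : (∫ t in Set.Ioi (0:ℝ), f t) ≤ V 0 := by
    refine le_of_tendsto htend ?_
    filter_upwards [Filter.eventually_ge_atTop (0:ℝ)] with i hi
    exact key i hi
  exact le_trans hfinal hV0γ
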